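/- Let H be a real Hilbert space, Q a nonempty closed convex subset of H, and g : Q × Q → ℝ a monotone bifunction on Q. Let α, β > 0 and u, v ∈ H, and suppose w_α, w_β ∈ Q satisfy g(w_α, y) + (1/α)⟨y − w_α, w_α − u⟩ ≥ 0 for all y ∈ Q and g(w_β, y) + (1/β)⟨y − w_β, w_β − v⟩ ≥ 0 for all y ∈ Q. Then ‖w_α − w_β‖ ≤ ‖v − u‖ + (|β − α|/β)‖w_β − v‖. -/

import Mathlib

/-- Resolvent estimate for two parameters: if `w_α = T_α^g(u)` and `w_β = T_β^g(v)`, then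
`‖w_α − w_β‖ ≤ ‖v − u‖ + (|β − α|/β)‖w_β − v‖`. -/
theorem resolvent_two_parameters
    {H : Type*} [NormedAddCommGroup H] [InnerProductSpace ℝ H] [CompleteSpace H]
    (Q : Set H) (hQne : Q.Nonempty) (hQcl : IsClosed Q) (hQcv : Convex ℝ Q)
    (g : H → H → ℝ)
    (hmono : ∀ u ∈ Q, ∀ v ∈ Q, g u v + g v u ≤ 0)
    (α β : ℝ) (hα : 0 < α) (hβ : 0 < β) (u v : H)
    (wα wβ : H) (hwαQ : wα ∈ Q) (hwβQ : wβ ∈ Q)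
    (hwα : ∀ y ∈ Q, g wα y + (1 / α) * (inner ℝ (y - wα) (wα - u) : ℝ) ≥ 0)
    (hwβ : ∀ y ∈ Q, g wβ y + (1 / β) * (inner ℝ (y - wβ) (wβ - v) : ℝ) ≥ 0) :
    ‖wα - wβ‖ ≤ ‖v - u‖ + (|β - α| / β) * ‖wβ - v‖ := by
  have h1 := hwα wβ hwβQ
  have h2 := hwβ wα hwαQ
  have hm := hmono wα hwαQ wβ hwβQ
  set d := wα - wβ with hd
  have hneg : (inner ℝ (wβ - wα) (wα - u) : ℝ) = - inner ℝ d (wα - u) := by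
    rw [hd, ← inner_neg_left]; congr 1; abel
  -- key inequality: -⟨d, wα-u⟩/α + ⟨d, wβ-v⟩/β ≥ 0
  have hkey : (1 / α) * (-(inner ℝ d (wα - u) : ℝ)) + (1 / β) * (inner ℝ d (wβ - v) : ℝ) ≥ 0 := by
    rw [hneg] at h1
    linarith
  -- ⟨d, wα-u⟩ ≤ (α/β) ⟨d, wβ-v⟩
  have hstep : (inner ℝ d (wα - u) : ℝ) ≤ (α / β) * (inner ℝ d (wβ - v) : ℝ) := by
    have h := mul_nonneg (le_of_lt hα) hkey
    have heq : α * ((1 / α) * (-(inner ℝ d (wα - u) : ℝ)) + (1 / β) * (inner ℝ d (wβ - v) : ℝ))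
        = -(inner ℝ d (wα - u) : ℝ) + (α / β) * (inner ℝ d (wβ - v) : ℝ) := by
      field_simp
    rw [heq] at h
    linarith
  have hdecomp : (inner ℝ d d : ℝ) =
      (inner ℝ d (wα - u) : ℝ) - (inner ℝ d (wβ - v) : ℝ) - (inner ℝ d (v - u) : ℝ) := by
    rw [← inner_sub_right, ← inner_sub_right]
    congr 1
    rw [hd]; abel
  have hcs1 : (inner ℝ d (u - v) : ℝ) ≤ ‖d‖ * ‖v - u‖ := by
    calc (inner ℝ d (u - v) : ℝ) ≤ ‖d‖ * ‖u - v‖ := real_inner_le_norm d (u - v)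
      _ = ‖d‖ * ‖v - u‖ := by rw [norm_sub_rev u v]
  have hcs2 : ((α - β) / β) * (inner ℝ d (wβ - v) : ℝ) ≤ (|β - α| / β) * (‖d‖ * ‖wβ - v‖) := by
    calc ((α - β) / β) * (inner ℝ d (wβ - v) : ℝ)
        ≤ |((α - β) / β) * (inner ℝ d (wβ - v) : ℝ)| := le_abs_self _
      _ = (|α - β| / β) * |(inner ℝ d (wβ - v) : ℝ)| := by
          rw [abs_mul, abs_div, abs_of_pos hβ]
      _ ≤ (|β - α| / β) * (‖d‖ * ‖wβ - v‖) := by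
          rw [abs_sub_comm α β]
          exact mul_le_mul_of_nonneg_left (abs_real_inner_le_norm _ _) (by positivity)
  have hmain : (inner ℝ d d : ℝ) ≤ ‖d‖ * (‖v - u‖ + (|β - α| / β) * ‖wβ - v‖) := by
    have h3 : (inner ℝ d d : ℝ) ≤ ((α - β) / β) * (inner ℝ d (wβ - v) : ℝ) + (inner ℝ d (u - v) : ℝ) := by
      have hne : (inner ℝ d (v - u) : ℝ) = - (inner ℝ d (u - v) : ℝ) := by
        rw [← inner_neg_right]; congr 1; abel
      rw [hdecomp, hne]
      have : (α / β) * (inner ℝ d (wβ - v) : ℝ) - (inner ℝ d (wβ - v) : ℝ)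
          = ((α - β) / β) * (inner ℝ d (wβ - v) : ℝ) := by field_simp
      linarith [hstep]
    calc (inner ℝ d d : ℝ) ≤ ((α - β) / β) * (inner ℝ d (wβ - v) : ℝ) + (inner ℝ d (u - v) : ℝ) := h3
      _ ≤ (|β - α| / β) * (‖d‖ * ‖wβ - v‖) + ‖d‖ * ‖v - u‖ := add_le_add hcs2 hcs1
      _ = ‖d‖ * (‖v - u‖ + (|β - α| / β) * ‖wβ - v‖) := by ring
  have hsq : ‖d‖ * ‖d‖ ≤ ‖d‖ * (‖v - u‖ + (|β - α| / β) * ‖wβ - v‖) := by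
    rwa [← real_inner_self_eq_norm_mul_norm]
  rcases eq_or_lt_of_le (norm_nonneg d) with h0 | h0
  · rw [← h0]; positivity
  · exact le_of_mul_le_mul_left hsq h0
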